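/- Let G_1, ..., G_k be finite sets and let D be a fractional factorial design on G = G_1 × ... × G_k with multiplicity function O and N = Σ_g O(g) runs. Define the generalized wordlength pattern by A_j(D) = N^{-2} Σ_{wt(g)=j} |χ_g(D)|² for j = 1,...,k, where the characters χ_g arise from a choice of abelian group structure on each G_i (with the weight of g counting nonidentity components). Then the values A_1(D), ..., A_k(D) are independent of the choice of abelian group structures on the sets G_i. -/

import Mathlib

open Finset


private lemma sum_monoidHom_eq_zero {A : Type*} [CommGroup A] [Fintype A]
    (ψ : A →* ℂ) (hψ : ψ ≠ 1) : ∑ a : A, ψ a = 0 := by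
  obtain ⟨y, hy⟩ : ∃ y, ψ y ≠ 1 := by
    by_contra h
    push_neg at h
    exact hψ (MonoidHom.ext fun a => (h a).trans rfl)
  have h2 : ψ y * ∑ a : A, ψ a = ∑ a : A, ψ a := by
    rw [Finset.mul_sum]
    simp_rw [← map_mul]
    exact Fintype.sum_equiv (Equiv.mulLeft y) _ _ fun a => rfl
  by_contra h3
  exact hy (mul_right_cancel₀ h3 (by rw [h2, one_mul]))

private lemma char_norm {A : Type*} [CommGroup A] [Fintype A]
    (ψ : A →* ℂ) (a : A) : ψ a * (starRingEnd ℂ) (ψ a) = 1 := by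
  have hp : (ψ a) ^ Fintype.card A = 1 := by
    rw [← map_pow, pow_card_eq_one, map_one]
  have h1 : Complex.normSq (ψ a) = 1 := by
    rw [Complex.normSq_eq_norm_sq,
      Complex.norm_eq_one_of_pow_eq_one hp Fintype.card_ne_zero, one_pow]
  rw [Complex.mul_conj, h1, Complex.ofReal_one]

private lemma col_orth {A : Type*} [CommGroup A] [Fintype A] [DecidableEq A]
    (χ : A ≃* (A →* ℂ)) (a b : A) :
    ∑ x : A, χ x a * (starRingEnd ℂ) (χ x b) =
      if a = b then (Fintype.card A : ℂ) else 0 := by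
  have hn : (Fintype.card A : ℂ) ≠ 0 := Nat.cast_ne_zero.mpr Fintype.card_ne_zero
  have row : ∀ x x' : A, ∑ y : A, χ x y * (starRingEnd ℂ) (χ x' y) =
      if x = x' then (Fintype.card A : ℂ) else 0 := by
    intro x x'
    by_cases hxx : x = x'
    · subst hxx
      simp [char_norm (χ x), Finset.card_univ]
    · rw [if_neg hxx]
      have hne : (χ x) * ((starRingEnd ℂ).toMonoidHom.comp (χ x')) ≠ 1 := by
        intro hcon
        apply hxx
        apply χ.injective
        ext y
        have h1 : χ x y * (starRingEnd ℂ) (χ x' y) = 1 := by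
          have := DFunLike.congr_fun hcon y
          simpa using this
        have h2 : χ x' y * (starRingEnd ℂ) (χ x' y) = 1 := char_norm (χ x') y
        have hc : (starRingEnd ℂ) (χ x' y) ≠ 0 := by
          intro h0; rw [h0, mul_zero] at h2; exact zero_ne_one h2
        exact mul_right_cancel₀ hc (h1.trans h2.symm)
      have := sum_monoidHom_eq_zero _ hne
      simpa using this
  classical
  set M : Matrix A A ℂ := Matrix.of fun x y => χ x y with hM
  set M' : Matrix A A ℂ :=
    Matrix.of fun y x => (starRingEnd ℂ) (χ x y) * (Fintype.card A : ℂ)⁻¹ with hM'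
  have hMM' : M * M' = 1 := by
    ext x x'
    rw [Matrix.mul_apply]
    simp only [hM, hM', Matrix.of_apply, Matrix.one_apply]
    simp_rw [← mul_assoc]
    rw [← Finset.sum_mul, row x x']
    by_cases h : x = x' <;> simp [h, hn]
  have hM'M := mul_eq_one_comm.mp hMM'
  have h2 : (M' * M) b a = (1 : Matrix A A ℂ) b a := by rw [hM'M]
  rw [Matrix.mul_apply] at h2
  simp only [hM, hM', Matrix.of_apply, Matrix.one_apply] at h2
  have h3 : ∑ x : A, χ x a * (starRingEnd ℂ) (χ x b) =
      (Fintype.card A : ℂ) * ∑ x : A, (starRingEnd ℂ) (χ x b) * (Fintype.card A : ℂ)⁻¹ * χ x a := by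
    rw [Finset.mul_sum]
    refine Finset.sum_congr rfl fun x _ => ?_
    field_simp
  rw [h3, h2]
  by_cases h : a = b
  · simp [h, eq_comm]
  · rw [if_neg h, if_neg (fun hc => h hc.symm), mul_zero]

private lemma inner_sum_eq {k : ℕ} {G : Fin k → Type*} [∀ i, Fintype (G i)]
    [∀ i, DecidableEq (G i)] {one : ∀ i, G i}
    {A : Fin k → Type*} [∀ i, CommGroup (A i)] [∀ i, Fintype (A i)]
    (eA : ∀ i, A i ≃ G i) (hA1 : ∀ i, eA i 1 = one i)
    (χA : ∀ i, A i ≃* (A i →* ℂ)) (j : ℕ) (h h' : ∀ i, G i) :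
    ∑ g ∈ univ.filter (fun g : ∀ i, G i =>
        (univ.filter fun i => g i ≠ one i).card = j),
      ∏ i, (χA i ((eA i).symm (g i)) ((eA i).symm (h i)) *
        (starRingEnd ℂ) (χA i ((eA i).symm (g i)) ((eA i).symm (h' i)))) =
    ∑ T ∈ univ.powersetCard j,
      ∏ i ∈ T, ((Fintype.card (G i) : ℂ) * (if h i = h' i then 1 else 0) - 1) := by
  classical
  set t : ∀ i, G i → ℂ := fun i x =>
    χA i ((eA i).symm x) ((eA i).symm (h i)) *
      (starRingEnd ℂ) (χA i ((eA i).symm x) ((eA i).symm (h' i))) with ht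
  have hone : ∀ i, (eA i).symm (one i) = 1 := fun i => by
    rw [← hA1 i, Equiv.symm_apply_apply]
  have htone : ∀ i, t i (one i) = 1 := by
    intro i
    simp [ht, hone i, map_one]
  have hsum : ∀ i, ∑ x : G i, t i x =
      (Fintype.card (G i) : ℂ) * (if h i = h' i then 1 else 0) := by
    intro i
    have e1 : ∑ a : A i, t i (eA i a) = ∑ x : G i, t i x :=
      Fintype.sum_equiv (eA i) (fun a => t i (eA i a)) (t i) (fun a => rfl)
    rw [← e1]
    have e2 : ∀ a : A i, t i (eA i a) =
        χA i a ((eA i).symm (h i)) * (starRingEnd ℂ) (χA i a ((eA i).symm (h' i))) := by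
      intro a; simp [ht, Equiv.symm_apply_apply]
    simp_rw [e2]
    rw [col_orth (χA i)]
    have hcard : Fintype.card (A i) = Fintype.card (G i) := Fintype.card_congr (eA i)
    have hiff : (eA i).symm (h i) = (eA i).symm (h' i) ↔ h i = h' i :=
      (eA i).symm.injective.eq_iff
    by_cases hh : h i = h' i
    · rw [if_pos (hiff.mpr hh), if_pos hh, hcard, mul_one]
    · rw [if_neg (fun hc => hh (hiff.mp hc)), if_neg hh, mul_zero]
  -- step 1: fiberwise
  have maps : ∀ g ∈ univ.filter (fun g : ∀ i, G i =>
      (univ.filter fun i => g i ≠ one i).card = j),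
      (univ.filter fun i => g i ≠ one i) ∈ univ.powersetCard j := by
    intro g hg
    rw [mem_filter] at hg
    rw [mem_powersetCard]
    exact ⟨subset_univ _, hg.2⟩
  rw [← Finset.sum_fiberwise_of_maps_to maps]
  refine Finset.sum_congr rfl fun T hT => ?_
  rw [mem_powersetCard] at hT
  -- the fiber is a piFinset
  set s : ∀ i, Finset (G i) := fun i =>
    if i ∈ T then univ.filter (· ≠ one i) else {one i} with hs
  have hfiber : ((univ.filter (fun g : ∀ i, G i =>
      (univ.filter fun i => g i ≠ one i).card = j)).filter
        (fun g => (univ.filter fun i => g i ≠ one i) = T)) = Fintype.piFinset s := by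
    ext g
    simp only [mem_filter, mem_univ, true_and, Fintype.mem_piFinset, hs]
    constructor
    · rintro ⟨-, hsupp⟩ i
      by_cases hi : i ∈ T
      · rw [if_pos hi]
        rw [← hsupp] at hi
        simp only [mem_filter, mem_univ, true_and] at hi
        simp [hi]
      · rw [if_neg hi]
        rw [← hsupp] at hi
        simp only [mem_filter, mem_univ, true_and] at hi
        push_neg at hi
        simp [hi]
    · intro hg
      have hsupp : (univ.filter fun i => g i ≠ one i) = T := by
        ext i
        simp only [mem_filter, mem_univ, true_and]
        constructor
        · intro hne
          by_contra hi
          have := hg i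
          rw [if_neg hi, mem_singleton] at this
          exact hne this
        · intro hi
          have := hg i
          rw [if_pos hi, mem_filter] at this
          exact this.2
      exact ⟨by rw [hsupp, hT.2], hsupp⟩
  rw [hfiber]
  rw [show (∑ g ∈ Fintype.piFinset s, ∏ i,
      ((χA i) ((eA i).symm (g i))) ((eA i).symm (h i)) *
        (starRingEnd ℂ) (((χA i) ((eA i).symm (g i))) ((eA i).symm (h' i)))) =
      ∑ g ∈ Fintype.piFinset s, ∏ i, t i (g i) from rfl]
  rw [← Finset.prod_univ_sum]
  rw [← Finset.prod_subset (subset_univ T)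
    (f := fun i => ∑ x ∈ s i, t i x) ?_]
  · refine Finset.prod_congr rfl fun i hi => ?_
    rw [hs]
    simp only [if_pos hi]
    rw [Finset.filter_ne', Finset.sum_erase_eq_sub (mem_univ _), htone i, hsum i]
  · intro i _ hi
    rw [hs]
    simp only [if_neg hi, Finset.sum_singleton, htone i]

private lemma master {k : ℕ} {G : Fin k → Type*} [∀ i, Fintype (G i)]
    [∀ i, DecidableEq (G i)] {one : ∀ i, G i}
    {A : Fin k → Type*} [∀ i, CommGroup (A i)] [∀ i, Fintype (A i)]
    (eA : ∀ i, A i ≃ G i) (hA1 : ∀ i, eA i 1 = one i)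
    (χA : ∀ i, A i ≃* (A i →* ℂ)) (O : (∀ i, G i) → ℕ) (j : ℕ)
    (J : (∀ i, G i) → ℂ)
    (hJ : ∀ g, J g = ∑ h : ∀ i, G i,
      (O h : ℂ) * ∏ i, χA i ((eA i).symm (g i)) ((eA i).symm (h i))) :
    ((∑ g ∈ univ.filter (fun g : ∀ i, G i =>
        (univ.filter fun i => g i ≠ one i).card = j),
        Complex.normSq (J g) : ℝ) : ℂ)
    = ∑ h : ∀ i, G i, ∑ h' : ∀ i, G i, (O h : ℂ) * (O h' : ℂ) *
        ∑ T ∈ univ.powersetCard j,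
          ∏ i ∈ T, ((Fintype.card (G i) : ℂ) * (if h i = h' i then 1 else 0) - 1) := by
  push_cast
  have step1 : ∀ g, (Complex.normSq (J g) : ℂ) =
      ∑ h : ∀ i, G i, ∑ h' : ∀ i, G i, (O h : ℂ) * (O h' : ℂ) *
        ∏ i, (χA i ((eA i).symm (g i)) ((eA i).symm (h i)) *
          (starRingEnd ℂ) (χA i ((eA i).symm (g i)) ((eA i).symm (h' i)))) := by
    intro g
    rw [← Complex.mul_conj, hJ g, map_sum, Finset.sum_mul_sum]
    refine Finset.sum_congr rfl fun h _ => Finset.sum_congr rfl fun h' _ => ?_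
    rw [map_mul, map_prod, Complex.conj_natCast, Finset.prod_mul_distrib]
    ring
  simp_rw [step1]
  rw [Finset.sum_comm]
  refine Finset.sum_congr rfl fun h _ => ?_
  rw [Finset.sum_comm]
  refine Finset.sum_congr rfl fun h' _ => ?_
  rw [← Finset.mul_sum, inner_sum_eq eA hA1 χA j h h']

/-- Theorem 2 of the paper: invariance of the generalized
wordlength pattern.  Let `G₁, …, G_k` be finite sets and `D` a fractional
factorial design on `G = G₁ × ⋯ × G_k` with multiplicity function `O : G → ℕ` and
`N = Σ_g O(g)` runs.  An abelian group structure on `Gᵢ` (with identity the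
distinguished element `1ᵢ`) is given by an abelian group (`Aᵢ`, resp. `Bᵢ`) with a
bijection onto `Gᵢ` sending the group identity to `1ᵢ`, together with an indexing
of the irreducible characters by group elements; it yields the characters
`χ_g(h) = ∏ᵢ χ_{gᵢ}(hᵢ)`, the J-characteristics `χ_g(D) = Σ_h O(h) χ_g(h)`, and
the generalized wordlengths `A_j(D) = N⁻² Σ_{wt(g)=j} |χ_g(D)|²`, where `wt(g)`
counts the nonidentity components of `g`.  Then for every `j = 1, …, k` the value
`A_j(D)` is the same for both group structures. -/
theorem GWLP_indep_of_group_structure {k : ℕ} (G : Fin k → Type*)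
    [∀ i, Fintype (G i)] [∀ i, DecidableEq (G i)] (one : ∀ i, G i)
    (A B : Fin k → Type*)
    [∀ i, CommGroup (A i)] [∀ i, Fintype (A i)]
    [∀ i, CommGroup (B i)] [∀ i, Fintype (B i)]
    (eA : ∀ i, A i ≃ G i) (eB : ∀ i, B i ≃ G i)
    (hA1 : ∀ i, eA i 1 = one i) (hB1 : ∀ i, eB i 1 = one i)
    (χA : ∀ i, A i ≃* (A i →* ℂ)) (χB : ∀ i, B i ≃* (B i →* ℂ))
    (O : (∀ i, G i) → ℕ) (N : ℕ) (hN : N = ∑ g : ∀ i, G i, O g)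
    (wt : (∀ i, G i) → ℕ)
    (hwt : ∀ g : ∀ i, G i, wt g = (Finset.univ.filter fun i => g i ≠ one i).card)
    (JA JB : (∀ i, G i) → ℂ)
    (hJA : ∀ g : ∀ i, G i, JA g = ∑ h : ∀ i, G i,
      (O h : ℂ) * ∏ i : Fin k, χA i ((eA i).symm (g i)) ((eA i).symm (h i)))
    (hJB : ∀ g : ∀ i, G i, JB g = ∑ h : ∀ i, G i,
      (O h : ℂ) * ∏ i : Fin k, χB i ((eB i).symm (g i)) ((eB i).symm (h i)))
    (AjA AjB : ℕ → ℝ)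
    (hAjA : ∀ j, AjA j = ((N : ℝ) ^ 2)⁻¹ *
      ∑ g ∈ Finset.univ.filter (fun g : ∀ i, G i => wt g = j), Complex.normSq (JA g))
    (hAjB : ∀ j, AjB j = ((N : ℝ) ^ 2)⁻¹ *
      ∑ g ∈ Finset.univ.filter (fun g : ∀ i, G i => wt g = j), Complex.normSq (JB g)) :
    ∀ j, 1 ≤ j → j ≤ k → AjA j = AjB j := by
  intro j _ _
  rw [hAjA j, hAjB j]
  congr 1
  simp_rw [hwt]
  have hA := master eA hA1 χA O j JA hJA
  have hB := master eB hB1 χB O j JB hJB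
  exact Complex.ofReal_inj.mp (hA.trans hB.symm)
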